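/- In the general ordered response panel model, the set U*(Y,Z) = {u ∈ ℝᵀ : ∃ v ∈ ℝ such that for all t ∈ [T], c_{Y_t} ≤ Z̃_t β̃ + v + u_t ≤ c_{Y_t + 1}} equals {u ∈ ℝᵀ : ∀ s,t ∈ [T], u_t - u_s ≤ c_{Y_t + 1} - c_{Y_s} - (Z̃_t - Z̃_s)β̃}. -/

import Mathlib

open scoped BigOperators

def dot {k : ℕ} (x y : Fin k → ℝ) : ℝ := ∑ i, x i * y i

lemma ereal_sub_add (a : EReal) (r r' : ℝ) : a - r + r' = a + ((r' - r : ℝ) : EReal) := by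
  induction a with
  | bot => simp [EReal.bot_sub, EReal.bot_add]
  | coe a => norm_cast; ring
  | top => rw [EReal.top_sub_coe, EReal.top_add_coe, EReal.top_add_coe]

lemma ereal_sub_coe (a : EReal) (r : ℝ) : a - (r : EReal) = a + ((-r : ℝ) : EReal) := by
  induction a with
  | bot => rw [EReal.bot_sub, EReal.bot_add]
  | coe a => norm_cast
  | top => rw [EReal.top_sub_coe, EReal.top_add_coe]

lemma ereal_sub_real_ne_top {a : EReal} (ha : a ≠ ⊤) (r : ℝ) : a - (r : EReal) ≠ ⊤ := by
  induction a with
  | bot => simp [EReal.bot_sub]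
  | coe a => norm_cast; exact EReal.coe_ne_top _
  | top => exact absurd rfl ha

lemma ereal_sub_real_ne_bot {a : EReal} (ha : a ≠ ⊥) (r : ℝ) : a - (r : EReal) ≠ ⊥ := by
  induction a with
  | bot => exact absurd rfl ha
  | coe a => norm_cast; exact EReal.coe_ne_bot _
  | top => simp [EReal.top_sub_coe]

lemma exists_real_btwn' (A B : EReal) (hAB : A ≤ B) (hA : A ≠ ⊤) (hB : B ≠ ⊥) :
    ∃ v : ℝ, A ≤ (v : EReal) ∧ (v : EReal) ≤ B := by
  induction A with
  | bot =>
    induction B with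
    | bot => exact absurd rfl hB
    | coe b => exact ⟨b, bot_le, le_refl _⟩
    | top => exact ⟨0, bot_le, le_top⟩
  | coe a => exact ⟨a, le_refl _, hAB⟩
  | top => exact absurd rfl hA

theorem general_ordered_response_Ustar {T k J : ℕ} (hT : 1 ≤ T)
    (c : Fin (J + 2) → EReal) (hc : StrictMono c)
    (hc0 : c 0 = ⊥) (hcJ1 : c (Fin.last (J + 1)) = ⊤)
    (Y : Fin T → Fin (J + 1)) (Zt : Fin T → Fin k → ℝ) (β : Fin k → ℝ) :
    {u : Fin T → ℝ | ∃ v : ℝ, ∀ t : Fin T,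
        c (Y t).castSucc ≤ ((dot (Zt t) β + v + u t : ℝ) : EReal) ∧
        ((dot (Zt t) β + v + u t : ℝ) : EReal) ≤ c (Y t).succ} =
    {u : Fin T → ℝ | ∀ s t : Fin T,
        ((u t - u s : ℝ) : EReal) ≤
          c (Y t).succ - c (Y s).castSucc - ((dot (Zt t) β - dot (Zt s) β : ℝ) : EReal)} := by
  haveI : Nonempty (Fin T) := ⟨⟨0, hT⟩⟩
  have haT : ∀ t : Fin T, c (Y t).castSucc ≠ ⊤ := by
    intro t
    have : c (Y t).castSucc < c (Fin.last (J + 1)) := hc (Fin.castSucc_lt_last (Y t))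
    rw [hcJ1] at this
    exact this.ne
  have hbB : ∀ t : Fin T, c (Y t).succ ≠ ⊥ := by
    intro t
    have : c 0 < c (Y t).succ := hc (Fin.succ_pos (Y t))
    rw [hc0] at this
    exact this.ne'
  ext u
  simp only [Set.mem_setOf_eq]
  constructor
  · rintro ⟨v, hv⟩ s t
    rw [EReal.le_sub_iff_add_le (Or.inl (EReal.coe_ne_bot _)) (Or.inl (EReal.coe_ne_top _)),
      ← EReal.coe_add,
      EReal.le_sub_iff_add_le (Or.inr (hbB t)) (Or.inl (haT s))]
    calc ((u t - u s + (dot (Zt t) β - dot (Zt s) β) : ℝ) : EReal) + c (Y s).castSucc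
        ≤ ((u t - u s + (dot (Zt t) β - dot (Zt s) β) : ℝ) : EReal)
            + ((dot (Zt s) β + v + u s : ℝ) : EReal) :=
          add_le_add_right (hv s).1 _
      _ = ((dot (Zt t) β + v + u t : ℝ) : EReal) := by
          rw [← EReal.coe_add]; norm_cast; ring
      _ ≤ c (Y t).succ := (hv t).2
  · intro h
    set L : Fin T → EReal := fun t => c (Y t).castSucc - ((dot (Zt t) β + u t : ℝ) : EReal)
      with hLdef
    set U : Fin T → EReal := fun t => c (Y t).succ - ((dot (Zt t) β + u t : ℝ) : EReal)
      with hUdef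
    have hLU : ∀ s t : Fin T, L s ≤ U t := by
      intro s t
      have h1 := h s t
      rw [EReal.le_sub_iff_add_le (Or.inl (EReal.coe_ne_bot _)) (Or.inl (EReal.coe_ne_top _)),
        ← EReal.coe_add,
        EReal.le_sub_iff_add_le (Or.inr (hbB t)) (Or.inl (haT s))] at h1
      rw [hLdef, hUdef]
      rw [EReal.sub_le_iff_le_add (Or.inl (EReal.coe_ne_bot _)) (Or.inl (EReal.coe_ne_top _))]
      have h1' : c (Y s).castSucc + ((u t - u s + (dot (Zt t) β - dot (Zt s) β) : ℝ) : EReal)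
          ≤ c (Y t).succ := by rwa [add_comm] at h1
      calc c (Y s).castSucc
          = c (Y s).castSucc + ((u t - u s + (dot (Zt t) β - dot (Zt s) β) : ℝ) : EReal)
              - ((u t - u s + (dot (Zt t) β - dot (Zt s) β) : ℝ) : EReal) :=
            (EReal.add_sub_cancel_right).symm
        _ ≤ c (Y t).succ - ((u t - u s + (dot (Zt t) β - dot (Zt s) β) : ℝ) : EReal) :=
            EReal.sub_le_sub h1' (le_refl _)
        _ = c (Y t).succ - ((dot (Zt t) β + u t : ℝ) : EReal)
              + ((dot (Zt s) β + u s : ℝ) : EReal) := by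
            rw [ereal_sub_coe, ereal_sub_add]
            congr 1
            norm_cast
            ring
    have hne : (Finset.univ : Finset (Fin T)).Nonempty := Finset.univ_nonempty
    have hAB : Finset.univ.sup' hne L ≤ Finset.univ.inf' hne U :=
      Finset.sup'_le _ _ fun s _ => Finset.le_inf' _ _ fun t _ => hLU s t
    have hAtop : Finset.univ.sup' hne L ≠ ⊤ := by
      have hlt : Finset.univ.sup' hne L < (⊤ : EReal) :=
        (Finset.sup'_lt_iff hne).2 fun t _ =>
          lt_top_iff_ne_top.2 (ereal_sub_real_ne_top (haT t) _)
      exact hlt.ne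
    have hBbot : Finset.univ.inf' hne U ≠ ⊥ := by
      have hlt : (⊥ : EReal) < Finset.univ.inf' hne U :=
        (Finset.lt_inf'_iff hne).2 fun t _ =>
          bot_lt_iff_ne_bot.2 (ereal_sub_real_ne_bot (hbB t) _)
      exact hlt.ne'
    obtain ⟨v, hvA, hvB⟩ := exists_real_btwn' _ _ hAB hAtop hBbot
    refine ⟨v, fun t => ?_⟩
    have hLt : L t ≤ (v : EReal) := le_trans (Finset.le_sup' L (Finset.mem_univ t)) hvA
    have hUt : (v : EReal) ≤ U t := le_trans hvB (Finset.inf'_le U (Finset.mem_univ t))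
    constructor
    · rw [hLdef] at hLt
      rw [EReal.sub_le_iff_le_add (Or.inl (EReal.coe_ne_bot _))
        (Or.inl (EReal.coe_ne_top _))] at hLt
      refine le_trans hLt (le_of_eq ?_)
      norm_cast
      ring
    · rw [hUdef] at hUt
      rw [EReal.le_sub_iff_add_le (Or.inl (EReal.coe_ne_bot _))
        (Or.inl (EReal.coe_ne_top _))] at hUt
      refine le_trans (le_of_eq ?_) hUt
      norm_cast
      ring
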